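/- arXiv:1704.06385 — 5 statements merged into one kernel-verified Lean document; each statement's English description precedes it below -/
import Mathlib

section
/- Let p ≥ 1 be an integer. Any solution f of f'' + (p/σ - σ/2) f' + f = 0 on an interval (0, ε) that extends to a C² function at σ = 0 (as an even function) is a scalar multiple of σ² - 2(p+1). -/
open Set Filter Topology

lemma const_of_hasDerivAt_zero {s : Set ℝ} (hconv : Convex ℝ s) (ho : IsOpen s)
    {h : ℝ → ℝ} (hd : ∀ x ∈ s, HasDerivAt h 0 x) {x y : ℝ} (hx : x ∈ s) (hy : y ∈ s) :
    h x = h y := by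
  refine hconv.is_const_of_fderivWithin_eq_zero
    (fun z hz => ((hd z hz).differentiableAt).differentiableWithinAt) (fun z hz => ?_) hx hy
  rw [fderivWithin_of_isOpen ho hz, ((hd z hz).hasFDerivAt).fderiv]
  ext; simp

set_option maxHeartbeats 1000000

/-- Frobenius analysis at the regular singular point `σ = 0`: any solution of
`f'' + (p/σ - σ/2) f' + f = 0` on `(0, ε)` which extends to a `C²` function on
`[0, ε)` is a scalar multiple of `σ² - 2(p+1)`. -/
theorem nullspace_solutions_are_multiples (p : ℕ) (hp : 1 ≤ p) (ε : ℝ) (hε : 0 < ε)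
    (f : ℝ → ℝ) (hf : ContDiffOn ℝ 2 f (Set.Ico 0 ε))
    (hode : ∀ σ ∈ Set.Ioo (0 : ℝ) ε,
      deriv (deriv f) σ + ((p : ℝ) / σ - σ / 2) * deriv f σ + f σ = 0) :
    ∃ c : ℝ, ∀ σ ∈ Set.Ico (0 : ℝ) ε, f σ = c * (σ ^ 2 - 2 * ((p : ℝ) + 1)) := by
  obtain ⟨q, rfl⟩ : ∃ q, p = q + 1 := ⟨p - 1, (Nat.succ_pred_eq_of_pos hp).symm⟩
  have hcast : ((q + 1 : ℕ) : ℝ) = (q : ℝ) + 1 := by push_cast; ring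
  set g : ℝ → ℝ := fun σ => σ ^ 2 - 2 * ((q : ℝ) + 1 + 1) with hgdef
  have hgoal : ∀ σ : ℝ, σ ^ 2 - 2 * (((q + 1 : ℕ) : ℝ) + 1) = g σ := by
    intro σ; rw [hgdef]; push_cast; ring
  have hsub : Set.Ioo (0:ℝ) ε ⊆ Set.Ico 0 ε := Set.Ioo_subset_Ico_self
  have hopen : IsOpen (Set.Ioo (0:ℝ) ε) := isOpen_Ioo
  -- differentiability facts
  have hfI : ContDiffOn ℝ 2 f (Set.Ioo 0 ε) := hf.mono hsub
  have hderiv1 : ContDiffOn ℝ 1 (deriv f) (Set.Ioo 0 ε) :=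
    hfI.deriv_of_isOpen hopen (by norm_num)
  have hdfat : ∀ σ ∈ Set.Ioo (0:ℝ) ε, HasDerivAt f (deriv f σ) σ := fun σ hσ =>
    ((hfI.differentiableOn (by norm_num)).differentiableAt (hopen.mem_nhds hσ)).hasDerivAt
  have hddfat : ∀ σ ∈ Set.Ioo (0:ℝ) ε, HasDerivAt (deriv f) (deriv (deriv f) σ) σ := fun σ hσ =>
    ((hderiv1.differentiableOn (by norm_num)).differentiableAt (hopen.mem_nhds hσ)).hasDerivAt
  have hgd : ∀ z : ℝ, HasDerivAt g (2*z) z := fun z => by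
    rw [hgdef]; simpa using (hasDerivAt_pow 2 z).sub_const (2 * ((q:ℝ) + 1 + 1))
  -- the Wronskian W and the rescaled function V
  set W : ℝ → ℝ := fun σ => 2 * σ * f σ - g σ * deriv f σ with hWdef
  set V : ℝ → ℝ := fun σ => W σ * (σ ^ (q+1) * Real.exp (-σ^2/4)) with hVdef
  have hV' : ∀ σ ∈ Set.Ioo (0:ℝ) ε, HasDerivAt V 0 σ := by
    intro σ hσ
    have hσ0 : σ ≠ 0 := ne_of_gt hσ.1
    have hWd : HasDerivAt W (2 * f σ + 2 * σ * deriv f σ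
        - (2 * σ * deriv f σ + g σ * deriv (deriv f) σ)) σ := by
      have h1 : HasDerivAt (fun x => 2 * x * f x) (2 * f σ + 2 * σ * deriv f σ) σ := by
        have := ((hasDerivAt_id σ).const_mul (2:ℝ)).mul (hdfat σ hσ); simp only [id_eq] at this
        exact this.congr_deriv (by ring)
      have h2 : HasDerivAt (fun x => g x * deriv f x)
          (2 * σ * deriv f σ + g σ * deriv (deriv f) σ) σ := by
        exact (hgd σ).mul (hddfat σ hσ)
      exact h1.sub h2
    have hexp : HasDerivAt (fun x : ℝ => Real.exp (-x^2/4)) (-(σ/2) * Real.exp (-σ^2/4)) σ := by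
      have h1 : HasDerivAt (fun x : ℝ => -x^2/4) (-(σ/2)) σ := by
        have := (hasDerivAt_pow 2 σ).neg.div_const 4; exact this.congr_deriv (by ring)
      exact ((Real.hasDerivAt_exp (-σ^2/4)).comp σ h1).congr_deriv (g' := -(σ/2) * Real.exp (-σ^2/4)) (by ring)
    have hE : HasDerivAt (fun x : ℝ => x ^ (q+1) * Real.exp (-x^2/4))
        (((q:ℝ)+1) * σ^q * Real.exp (-σ^2/4) + σ^(q+1) * (-(σ/2) * Real.exp (-σ^2/4))) σ := by
      have := (hasDerivAt_pow (q+1) σ).mul hexp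
      exact this.congr_deriv (by push_cast; ring)
    have hVd := hWd.mul hE
    refine hVd.congr_deriv ?_
    have hB : deriv (deriv f) σ
        = -((((q:ℕ)+1 : ℝ)/σ - σ/2) * deriv f σ) - f σ := by
      have := hode σ hσ; push_cast at this ⊢; linarith
    rw [hWdef, hgdef, hB]
    field_simp
    ring
  -- V is constant on Ioo 0 ε
  have hε2 : ε/2 ∈ Set.Ioo (0:ℝ) ε := ⟨by linarith, by linarith⟩
  have hVc : ∀ σ ∈ Set.Ioo (0:ℝ) ε, V σ = V (ε/2) := fun σ hσ =>
    const_of_hasDerivAt_zero (convex_Ioo _ _) hopen hV' hσ hε2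
  -- limit of V at 0 is 0
  have hneB : (𝓝[Set.Ioo (0:ℝ) ε] 0).NeBot := by
    apply mem_closure_iff_nhdsWithin_neBot.mp
    rw [closure_Ioo hε.ne]; exact ⟨le_rfl, hε.le⟩
  have hflim : Tendsto f (𝓝[Set.Ioo (0:ℝ) ε] 0) (𝓝 (f 0)) :=
    ((hf.continuousOn 0 ⟨le_rfl, hε⟩).tendsto).mono_left (nhdsWithin_mono _ hsub)
  have hdlim : Tendsto (deriv f) (𝓝[Set.Ioo (0:ℝ) ε] 0)
      (𝓝 (derivWithin f (Set.Ico 0 ε) 0)) := by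
    have hc : ContinuousOn (derivWithin f (Set.Ico 0 ε)) (Set.Ico 0 ε) :=
      hf.continuousOn_derivWithin (uniqueDiffOn_Ico 0 ε) (by norm_num)
    have := ((hc 0 ⟨le_rfl, hε⟩).tendsto).mono_left (nhdsWithin_mono _ hsub)
    refine this.congr' ?_
    filter_upwards [self_mem_nhdsWithin] with σ hσ
    exact derivWithin_of_mem_nhds (mem_of_superset (hopen.mem_nhds hσ) hsub)
  have hidlim : Tendsto (fun σ : ℝ => σ) (𝓝[Set.Ioo (0:ℝ) ε] 0) (𝓝 0) :=
    tendsto_id.mono_left nhdsWithin_le_nhds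
  have hWlim : Tendsto W (𝓝[Set.Ioo (0:ℝ) ε] 0)
      (𝓝 (2 * 0 * f 0 - g 0 * derivWithin f (Set.Ico 0 ε) 0)) := by
    rw [hWdef]
    exact ((hidlim.const_mul 2).mul hflim).sub
      ((((hidlim.pow 2).sub_const _).mul hdlim))
  have hElim : Tendsto (fun σ : ℝ => σ ^ (q+1) * Real.exp (-σ^2/4))
      (𝓝[Set.Ioo (0:ℝ) ε] 0) (𝓝 0) := by
    have hc : Continuous fun σ : ℝ => σ ^ (q+1) * Real.exp (-σ^2/4) := by continuity
    have := (hc.tendsto 0).mono_left (nhdsWithin_le_nhds (a := (0:ℝ)) (s := Set.Ioo 0 ε))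
    simpa using this
  have hVlim : Tendsto V (𝓝[Set.Ioo (0:ℝ) ε] 0) (𝓝 0) := by
    have := hWlim.mul hElim
    simpa using this
  have hVhalf : V (ε/2) = 0 := by
    have h2 : Tendsto V (𝓝[Set.Ioo (0:ℝ) ε] 0) (𝓝 (V (ε/2))) := by
      refine tendsto_const_nhds.congr' ?_
      filter_upwards [self_mem_nhdsWithin] with σ hσ
      exact (hVc σ hσ).symm
    exact tendsto_nhds_unique h2 hVlim
  -- hence W = 0 on Ioo 0 ε
  have hW0 : ∀ σ ∈ Set.Ioo (0:ℝ) ε, W σ = 0 := by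
    intro σ hσ
    have h1 : V σ = 0 := (hVc σ hσ).trans hVhalf
    have h2 : σ ^ (q+1) * Real.exp (-σ^2/4) ≠ 0 :=
      mul_ne_zero (pow_ne_zero _ (ne_of_gt hσ.1)) (Real.exp_ne_zero _)
    rw [hVdef] at h1
    exact (mul_eq_zero.mp h1).resolve_right h2
  -- f/g is locally constant where g ≠ 0
  have key : ∀ a b : ℝ, 0 ≤ a → b ≤ ε → (∀ σ ∈ Set.Ioo a b, g σ ≠ 0) →
      ∀ x ∈ Set.Ioo a b, ∀ y ∈ Set.Ioo a b, f x / g x = f y / g y := by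
    intro a b ha hb hgne x hx y hy
    have hsub' : Set.Ioo a b ⊆ Set.Ioo 0 ε := fun z hz =>
      ⟨lt_of_le_of_lt ha hz.1, lt_of_lt_of_le hz.2 hb⟩
    refine const_of_hasDerivAt_zero (h := fun x => f x / g x) (convex_Ioo a b) isOpen_Ioo
      (fun z hz => ?_) hx hy
    have hz' := hsub' hz
    have hd := (hdfat z hz').div (hgd z) (hgne z hz)
    have hnum : (deriv f z * g z - f z * (2*z)) / (g z)^2 = 0 := by
      have hw := hW0 z hz'
      simp only [hWdef] at hw
      have : deriv f z * g z - f z * (2*z) = -(2 * z * f z - g z * deriv f z) := by ring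
      rw [this, hw, neg_zero, zero_div]
    exact hd.congr_deriv hnum
  -- the root of g
  set σ₀ : ℝ := Real.sqrt (2 * ((q:ℝ) + 1 + 1)) with hσ₀def
  have hRpos : (0:ℝ) < 2 * ((q:ℝ) + 1 + 1) := by positivity
  have hσ₀pos : 0 < σ₀ := Real.sqrt_pos.mpr hRpos
  have hσ₀sq : σ₀ ^ 2 = 2 * ((q:ℝ) + 1 + 1) := Real.sq_sqrt hRpos.le
  have hgneg : ∀ σ : ℝ, 0 ≤ σ → σ < σ₀ → g σ < 0 := by
    intro σ h0 hlt
    have : σ ^ 2 < σ₀ ^ 2 := by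
      apply pow_lt_pow_left₀ hlt h0 (by norm_num)
    rw [hgdef]; simp only; nlinarith
  have hgpos : ∀ σ : ℝ, σ₀ < σ → 0 < g σ := by
    intro σ hlt
    have : σ₀ ^ 2 < σ ^ 2 := by
      apply pow_lt_pow_left₀ hlt hσ₀pos.le (by norm_num)
    rw [hgdef]; simp only; nlinarith
  have hgσ₀ : g σ₀ = 0 := by rw [hgdef]; simp only; rw [hσ₀sq]; ring
  -- the constant
  set b : ℝ := min ε σ₀ with hbdef
  have hb0 : 0 < b := lt_min hε hσ₀pos
  have hm : b/2 ∈ Set.Ioo 0 b := ⟨by linarith, by linarith⟩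
  have hgb : ∀ σ ∈ Set.Ioo (0:ℝ) b, g σ ≠ 0 := fun σ hσ =>
    (hgneg σ hσ.1.le (lt_of_lt_of_le hσ.2 (min_le_right _ _))).ne
  set c : ℝ := f (b/2) / g (b/2) with hcdef
  have hIoob : ∀ σ ∈ Set.Ioo (0:ℝ) b, f σ = c * g σ := by
    intro σ hσ
    have := key 0 b le_rfl (min_le_left _ _) hgb σ hσ (b/2) hm
    rw [hcdef, ← this, div_mul_cancel₀]
    exact hgb σ hσ
  have hsubb : Set.Ioo (0:ℝ) b ⊆ Set.Ico 0 ε := fun z hz =>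
    ⟨hz.1.le, lt_of_lt_of_le hz.2 (min_le_left _ _)⟩
  have h0eq : f 0 = c * g 0 := by
    have hneBb : (𝓝[Set.Ioo (0:ℝ) b] 0).NeBot := by
      apply mem_closure_iff_nhdsWithin_neBot.mp
      rw [closure_Ioo hb0.ne]; exact ⟨le_rfl, hb0.le⟩
    have t1 : Tendsto f (𝓝[Set.Ioo (0:ℝ) b] 0) (𝓝 (f 0)) :=
      ((hf.continuousOn 0 ⟨le_rfl, hε⟩).tendsto).mono_left (nhdsWithin_mono _ hsubb)
    have hgc : Continuous g := by rw [hgdef]; exact (continuous_pow 2).sub continuous_const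
    have t2 : Tendsto (fun σ => c * g σ) (𝓝[Set.Ioo (0:ℝ) b] 0) (𝓝 (c * g 0)) :=
      ((hgc.tendsto 0).const_mul c).mono_left nhdsWithin_le_nhds
    have t3 : Tendsto f (𝓝[Set.Ioo (0:ℝ) b] 0) (𝓝 (c * g 0)) := by
      refine t2.congr' ?_
      filter_upwards [self_mem_nhdsWithin] with σ hσ
      exact (hIoob σ hσ).symm
    exact tendsto_nhds_unique t1 t3
  refine ⟨c, fun σ hσ => ?_⟩
  rw [hgoal σ]
  rcases eq_or_lt_of_le hσ.1 with h0 | h0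
  · rw [← h0]; exact h0eq
  rcases le_or_gt ε σ₀ with hcase | hcase
  · -- b = ε
    have hbε : b = ε := min_eq_left hcase
    exact hIoob σ ⟨h0, by rw [hbε]; exact hσ.2⟩
  · -- σ₀ < ε, b = σ₀
    have hbσ₀ : b = σ₀ := min_eq_right hcase.le
    have hσ₀mem : σ₀ ∈ Set.Ioo (0:ℝ) ε := ⟨hσ₀pos, hcase⟩
    have hfσ₀ : f σ₀ = 0 := by
      have := hW0 σ₀ hσ₀mem
      simp only [hWdef] at this
      rw [hgσ₀, zero_mul, sub_zero] at this
      rcases mul_eq_zero.mp this with h | h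
      · rcases mul_eq_zero.mp h with h2 | h2
        · norm_num at h2
        · exact absurd h2 hσ₀pos.ne'
      · exact h
    -- the constant on the right interval
    have hm2 : (σ₀ + ε)/2 ∈ Set.Ioo σ₀ ε := ⟨by linarith, by linarith⟩
    have hgr : ∀ τ ∈ Set.Ioo σ₀ ε, g τ ≠ 0 := fun τ hτ => (hgpos τ hτ.1).ne'
    set c₂ : ℝ := f ((σ₀ + ε)/2) / g ((σ₀ + ε)/2) with hc2def
    have hIoor : ∀ τ ∈ Set.Ioo σ₀ ε, f τ = c₂ * g τ := by
      intro τ hτ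
      have := key σ₀ ε hσ₀pos.le le_rfl hgr τ hτ ((σ₀ + ε)/2) hm2
      rw [hc2def, ← this, div_mul_cancel₀]
      exact hgr τ hτ
    -- matching derivatives at σ₀
    have hud1 : UniqueDiffWithinAt ℝ (Set.Ioo (0:ℝ) σ₀) σ₀ := by
      refine uniqueDiffWithinAt_convex (convex_Ioo 0 σ₀) ?_ ?_
      · rw [interior_Ioo]; exact Set.nonempty_Ioo.mpr hσ₀pos
      · rw [closure_Ioo hσ₀pos.ne]; exact ⟨hσ₀pos.le, le_rfl⟩
    have hud2 : UniqueDiffWithinAt ℝ (Set.Ioo σ₀ ε) σ₀ := by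
      refine uniqueDiffWithinAt_convex (convex_Ioo σ₀ ε) ?_ ?_
      · rw [interior_Ioo]; exact Set.nonempty_Ioo.mpr hcase
      · rw [closure_Ioo hcase.ne]; exact ⟨le_rfl, hcase.le⟩
    have hcgd : HasDerivAt (fun σ => c * g σ) (c * (2 * σ₀)) σ₀ :=
      (hgd σ₀).const_mul c
    have hc2d : HasDerivAt (fun σ => c₂ * g σ) (c₂ * (2 * σ₀)) σ₀ :=
      (hgd σ₀).const_mul c₂
    have hcgσ₀ : f σ₀ = c * g σ₀ := by rw [hfσ₀, hgσ₀, mul_zero]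
    have hc2σ₀ : f σ₀ = c₂ * g σ₀ := by rw [hfσ₀, hgσ₀, mul_zero]
    have h1 : HasDerivWithinAt f (c * (2 * σ₀)) (Set.Ioo (0:ℝ) σ₀) σ₀ := by
      refine (hcgd.hasDerivWithinAt).congr ?_ hcgσ₀
      intro y hy
      exact hIoob y (by rwa [hbσ₀])
    have h2 : HasDerivWithinAt f (c₂ * (2 * σ₀)) (Set.Ioo σ₀ ε) σ₀ := by
      refine (hc2d.hasDerivWithinAt).congr ?_ hc2σ₀
      intro y hy
      exact hIoor y hy
    have h3 : HasDerivWithinAt f (deriv f σ₀) (Set.Ioo (0:ℝ) σ₀) σ₀ :=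
      (hdfat σ₀ hσ₀mem).hasDerivWithinAt
    have h4 : HasDerivWithinAt f (deriv f σ₀) (Set.Ioo σ₀ ε) σ₀ :=
      (hdfat σ₀ hσ₀mem).hasDerivWithinAt
    have e1 : c * (2 * σ₀) = deriv f σ₀ := by
      rw [← h1.derivWithin hud1, ← h3.derivWithin hud1]
    have e2 : c₂ * (2 * σ₀) = deriv f σ₀ := by
      rw [← h2.derivWithin hud2, ← h4.derivWithin hud2]
    have hcc2 : c = c₂ := by
      have h2σ₀ : (2 * σ₀) ≠ 0 := by positivity
      have := e1.trans e2.symm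
      exact mul_right_cancel₀ h2σ₀ this
    rcases lt_trichotomy σ σ₀ with hlt | heq | hgt
    · exact hIoob σ (by rw [hbσ₀]; exact ⟨h0, hlt⟩)
    · rw [heq]; exact hcgσ₀
    · rw [hcc2]; exact hIoor σ ⟨hgt, hσ.2⟩
end

section
/- Suppose b : M × [0,T) → ℝ is a smooth function on a compact manifold M satisfying ∂_t b = Δ_{g(t)} b - 2|∇∇φ|² - 2 g(∇b, ∇log φ) + 2 b φ^{-2}(μ - (n_F - 1) b) along a smooth family of metrics g(t), where φ > 0 is smooth, μ > 0 and n_F ≥ 2. If b ≤ C/(n_F - 1) at t = 0 for some constant C ≥ μ, then b ≤ C/(n_F - 1) for all t ∈ [0,T). -/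
/-- Preservation of the gradient bound `b = |∇φ|² ≤ C/(n_F-1)` for a singly warped
product Ricci flow with positive fiber Einstein constant `μ`.  The manifold and
geometric operators are abstracted: `lap x t` is the Laplacian `Δ_{g(t)} b` at `x`,
`hess x t = |∇∇φ|² ≥ 0`, `grad x t = g(∇b, ∇log φ)`, and the maximum-principle
structure of the Laplacian and gradient at an interior spatial maximum is assumed. -/
theorem gradient_bound_preserved
    {M : Type*} [TopologicalSpace M] [CompactSpace M] [Nonempty M]
    (T : ℝ) (hT : 0 < T) (nF : ℕ) (hnF : 2 ≤ nF)
    (b lap hess grad φ : M → ℝ → ℝ) (μ C : ℝ)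
    (hμ : 0 < μ) (hC : μ ≤ C)
    (hφ : ∀ x t, 0 < φ x t)
    (hcont : Continuous fun z : M × ℝ => b z.1 z.2)
    (hpde : ∀ x, ∀ t ∈ Set.Ico (0 : ℝ) T,
      HasDerivAt (fun s => b x s)
        (lap x t - 2 * hess x t - 2 * grad x t
          + 2 * b x t * (φ x t) ^ (-2 : ℤ) * (μ - ((nF : ℝ) - 1) * b x t)) t)
    (hhess : ∀ x t, 0 ≤ hess x t)
    (hmaxpt : ∀ t ∈ Set.Ico (0 : ℝ) T, ∀ x : M,
      (∀ y : M, b y t ≤ b x t) → lap x t ≤ 0 ∧ grad x t = 0)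
    (hinit : ∀ x : M, b x 0 ≤ C / ((nF : ℝ) - 1)) :
    ∀ x : M, ∀ t ∈ Set.Ico (0 : ℝ) T, b x t ≤ C / ((nF : ℝ) - 1) := by
  set n1 : ℝ := (nF : ℝ) - 1 with hn1def
  have hn1 : (1 : ℝ) ≤ n1 := by
    have h2 : (2 : ℝ) ≤ (nF : ℝ) := by exact_mod_cast hnF
    simp only [hn1def]; linarith
  have hn1pos : (0 : ℝ) < n1 := by linarith
  set K : ℝ := C / n1 with hKdef
  have hKpos : 0 < K := div_pos (lt_of_lt_of_le hμ hC) hn1pos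
  have hn1K : n1 * K = C := by
    rw [hKdef]; field_simp
  -- barrier claim
  have main : ∀ ε > (0 : ℝ), ∀ t1 ∈ Set.Ico (0 : ℝ) T, ∀ x : M,
      b x t1 < K + ε * (1 + t1) := by
    intro ε hε t1 ht1 x
    by_contra hcon
    push_neg at hcon
    set ψ : ℝ → ℝ := fun s => K + ε * (1 + s) with hψ
    set Bset : Set ℝ := {t | t ∈ Set.Icc (0 : ℝ) t1 ∧ ∃ y : M, ψ t ≤ b y t} with hBdef
    have hBne : Bset.Nonempty := ⟨t1, ⟨⟨ht1.1, le_refl _⟩, ⟨x, hcon⟩⟩⟩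
    have hBclosed : IsClosed Bset := by
      have himg : Bset = Prod.snd ''
          {p : M × ℝ | p.2 ∈ Set.Icc (0 : ℝ) t1 ∧ ψ p.2 ≤ b p.1 p.2} := by
        ext t
        constructor
        · rintro ⟨ht, y, hy⟩; exact ⟨(y, t), ⟨ht, hy⟩, rfl⟩
        · rintro ⟨⟨y, s⟩, ⟨hs, hy⟩, rfl⟩; exact ⟨hs, y, hy⟩
      rw [himg]
      apply isClosedMap_snd_of_compactSpace
      have hc1 : IsClosed {p : M × ℝ | p.2 ∈ Set.Icc (0 : ℝ) t1} :=
        isClosed_Icc.preimage continuous_snd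
      have hc2 : IsClosed {p : M × ℝ | ψ p.2 ≤ b p.1 p.2} := by
        apply isClosed_le
        · exact (continuous_const.add (continuous_const.mul
            (continuous_const.add continuous_id))).comp continuous_snd
        · exact hcont
      exact hc1.inter hc2
    have hBbdd : BddBelow Bset := ⟨0, fun t ht => ht.1.1⟩
    set t0 : ℝ := sInf Bset with ht0def
    have ht0mem : t0 ∈ Bset := hBclosed.csInf_mem hBne hBbdd
    obtain ⟨ht0Icc, y1, hy1⟩ := ht0mem
    have ht0Ico : t0 ∈ Set.Ico (0 : ℝ) T := ⟨ht0Icc.1, lt_of_le_of_lt ht0Icc.2 ht1.2⟩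
    have ht0pos : 0 < t0 := by
      rcases lt_or_eq_of_le ht0Icc.1 with h | h
      · exact h
      · exfalso
        have h0 : ψ 0 ≤ b y1 0 := by rw [← h] at hy1; exact hy1
        have : b y1 0 ≤ K := hinit y1
        simp only [hψ] at h0
        nlinarith
    -- spatial maximum point at time t0
    obtain ⟨x0, -, hx0⟩ := isCompact_univ.exists_isMaxOn Set.univ_nonempty
      ((hcont.comp (continuous_id.prodMk continuous_const)).continuousOn :
        ContinuousOn (fun y : M => b y t0) Set.univ)
    have hx0max : ∀ y : M, b y t0 ≤ b x0 t0 := fun y => hx0 (Set.mem_univ y)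
    obtain ⟨hlap, hgrad⟩ := hmaxpt t0 ht0Ico x0 hx0max
    have hb0 : ψ t0 ≤ b x0 t0 := le_trans hy1 (hx0max y1)
    have hb0pos : 0 < b x0 t0 := by
      have : 0 < ψ t0 := by simp only [hψ]; nlinarith
      linarith
    have hreactneg : μ - n1 * b x0 t0 < 0 := by
      have h1 : n1 * ψ t0 ≤ n1 * b x0 t0 := mul_le_mul_of_nonneg_left hb0 hn1pos.le
      simp only [hψ] at h1
      have hx : 0 < n1 * (ε * (1 + t0)) :=
        mul_pos hn1pos (mul_pos hε (by linarith))
      nlinarith [hn1K, hx, h1]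
    have hφ2 : 0 < (φ x0 t0) ^ (-2 : ℤ) := zpow_pos (hφ x0 t0) _
    have hreac : 2 * b x0 t0 * (φ x0 t0) ^ (-2 : ℤ) * (μ - n1 * b x0 t0) < 0 :=
      mul_neg_of_pos_of_neg (by positivity) hreactneg
    set b' : ℝ := lap x0 t0 - 2 * hess x0 t0 - 2 * grad x0 t0
      + 2 * b x0 t0 * (φ x0 t0) ^ (-2 : ℤ) * (μ - n1 * b x0 t0) with hb'def
    have hb'neg : b' < 0 := by
      have := hhess x0 t0
      rw [hb'def, hgrad]
      linarith
    -- derivative of the barrier-comparison function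
    have hψd : HasDerivAt ψ ε t0 := by
      have h := (((hasDerivAt_id t0).const_add (1 : ℝ)).const_mul ε).const_add K
      simpa [hψ] using h
    have hderiv : HasDerivAt (fun s => b x0 s - ψ s) (b' - ε) t0 :=
      (hpde x0 t0 ht0Ico).sub hψd
    have hslope : Filter.Tendsto (slope (fun s => b x0 s - ψ s) t0)
        (nhdsWithin t0 (Set.Iio t0)) (nhds (b' - ε)) := by
      refine (hasDerivAt_iff_tendsto_slope.mp hderiv).mono_left
        (nhdsWithin_mono _ ?_)
      intro s hs
      simp only [Set.mem_compl_iff, Set.mem_singleton_iff]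
      exact ne_of_lt hs
    have hev : ∀ᶠ s in nhdsWithin t0 (Set.Iio t0),
        0 ≤ slope (fun s => b x0 s - ψ s) t0 s := by
      filter_upwards [Ioo_mem_nhdsLT_of_mem (⟨ht0pos, le_refl t0⟩ : t0 ∈ Set.Ioc 0 t0)]
        with s hs
      have hsnotB : s ∉ Bset := fun hmem => absurd (csInf_le hBbdd hmem) (not_le.mpr hs.2)
      have hsIcc : s ∈ Set.Icc (0 : ℝ) t1 := ⟨hs.1.le, le_trans hs.2.le ht0Icc.2⟩
      have hslt : b x0 s < ψ s := by
        by_contra hge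
        push_neg at hge
        exact hsnotB ⟨hsIcc, x0, hge⟩
      rw [slope_def_field]
      refine div_nonneg_iff.mpr (Or.inr ⟨by linarith, by linarith [hs.2]⟩)
    have hfinal : 0 ≤ b' - ε := ge_of_tendsto hslope hev
    linarith
  -- take ε → 0
  intro x t ht
  have h1t : (0 : ℝ) < 1 + t := by linarith [ht.1]
  by_contra hgt
  push_neg at hgt
  have hεpos : 0 < (b x t - K) / (1 + t) := div_pos (by linarith) h1t
  have hlt := main _ hεpos t ht x
  have heq : K + (b x t - K) / (1 + t) * (1 + t) = b x t := by
    field_simp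
    ring
  linarith
end

section
/- Let B > 0 and n ≥ 1. If u : [t₀, 0] → ℝ satisfies u' ≤ -2n u², u ≥ 0, and u(t₀) ≤ B, then u(0) ≤ B/(1 + 2nB(0 - t₀)); consequently if u is defined on (-∞, 0] with 0 ≤ u ≤ B and u' ≤ -2nu², then u(0) = 0. -/
lemma riccati_aux (n : ℕ) (B : ℝ) (hB : 0 < B) (t₀ : ℝ) (ht₀ : t₀ ≤ 0)
    (u u' : ℝ → ℝ)
    (hu : ∀ t ∈ Set.Icc t₀ (0 : ℝ), HasDerivAt u (u' t) t)
    (hode : ∀ t ∈ Set.Icc t₀ (0 : ℝ), u' t ≤ -2 * (n : ℝ) * (u t) ^ 2)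
    (hpos : ∀ t ∈ Set.Icc t₀ (0 : ℝ), 0 ≤ u t)
    (hinit : u t₀ ≤ B) : u 0 ≤ B / (1 + 2 * (n : ℝ) * B * (0 - t₀)) := by
  have hD : 0 < 1 + 2 * (n : ℝ) * B * (0 - t₀) := by
    nlinarith [mul_nonneg (by positivity : (0:ℝ) ≤ 2 * (n:ℝ) * B) (by linarith : (0:ℝ) ≤ 0 - t₀)]
  have h0mem : (0 : ℝ) ∈ Set.Icc t₀ (0:ℝ) := ⟨ht₀, le_refl 0⟩
  have ht₀mem : t₀ ∈ Set.Icc t₀ (0:ℝ) := ⟨le_refl _, ht₀⟩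
  have hcont : ContinuousOn u (Set.Icc t₀ 0) := fun t ht =>
    (hu t ht).continuousAt.continuousWithinAt
  by_cases hall : ∀ t ∈ Set.Icc t₀ (0:ℝ), 0 < u t
  · -- g = 1/u, h = g - 2n t is monotone
    set g : ℝ → ℝ := fun t => (u t)⁻¹ with hg
    set h : ℝ → ℝ := fun t => g t - 2 * (n:ℝ) * t with hh
    have hderiv : ∀ x ∈ Set.Icc t₀ (0:ℝ),
        HasDerivAt h (-(u' x) / (u x) ^ 2 - 2 * (n:ℝ)) x := by
      intro x hx
      have h1 : HasDerivAt g (-(u' x) / (u x) ^ 2) x :=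
        (hu x hx).inv (ne_of_gt (hall x hx))
      have h2 : HasDerivAt (fun t : ℝ => 2 * (n:ℝ) * t) (2 * (n:ℝ)) x := by
        simpa using (hasDerivAt_id x).const_mul (2 * (n:ℝ))
      exact h1.sub h2
    have hdnn : ∀ x ∈ Set.Icc t₀ (0:ℝ), 0 ≤ -(u' x) / (u x) ^ 2 - 2 * (n:ℝ) := by
      intro x hx
      have hux : 0 < u x := hall x hx
      have hsq : 0 < (u x) ^ 2 := by positivity
      have : 2 * (n:ℝ) * (u x) ^ 2 ≤ -(u' x) := by linarith [hode x hx]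
      have := (le_div_iff₀ hsq).2 (by linarith : 2 * (n:ℝ) * (u x)^2 ≤ -(u' x))
      linarith
    have hmono : MonotoneOn h (Set.Icc t₀ 0) := by
      apply monotoneOn_of_deriv_nonneg (convex_Icc _ _)
      · exact fun t ht => (hderiv t ht).continuousAt.continuousWithinAt
      · intro x hx
        rw [interior_Icc] at hx
        exact (hderiv x (Set.Ioo_subset_Icc_self hx)).differentiableAt.differentiableWithinAt
      · intro x hx
        rw [interior_Icc] at hx
        have hx' : x ∈ Set.Icc t₀ (0:ℝ) := Set.Ioo_subset_Icc_self hx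
        rw [(hderiv x hx').deriv]
        exact hdnn x hx'
    have key : h t₀ ≤ h 0 := hmono ht₀mem h0mem ht₀
    have hut₀ : 0 < u t₀ := hall t₀ ht₀mem
    have hg0 : (1 + 2 * (n:ℝ) * B * (0 - t₀)) / B ≤ g 0 := by
      have h1 : B⁻¹ ≤ g t₀ := by
        simpa [hg] using inv_anti₀ hut₀ hinit
      have : g t₀ + 2 * (n:ℝ) * (0 - t₀) ≤ g 0 := by
        simp only [hh] at key; linarith
      have h2 : (1 + 2 * (n:ℝ) * B * (0 - t₀)) / B
          = B⁻¹ + 2 * (n:ℝ) * (0 - t₀) := by field_simp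
      linarith
    have hu0 : 0 < u 0 := hall 0 h0mem
    have hg0pos : 0 < g 0 := by simpa [hg] using inv_pos.2 hu0
    have hDB : 0 < (1 + 2 * (n:ℝ) * B * (0 - t₀)) / B := by positivity
    calc u 0 = (g 0)⁻¹ := by simp [hg]
      _ ≤ ((1 + 2 * (n:ℝ) * B * (0 - t₀)) / B)⁻¹ := inv_anti₀ hDB hg0
      _ = B / (1 + 2 * (n:ℝ) * B * (0 - t₀)) := by rw [inv_div]
  · -- u vanishes somewhere; u is antitone so u 0 ≤ 0
    push_neg at hall
    obtain ⟨s, hs, hus⟩ := hall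
    have hus0 : u s = 0 := le_antisymm hus (hpos s hs)
    have hanti : AntitoneOn u (Set.Icc t₀ 0) := by
      apply antitoneOn_of_deriv_nonpos (convex_Icc _ _) hcont
      · intro x hx
        rw [interior_Icc] at hx
        exact (hu x (Set.Ioo_subset_Icc_self hx)).differentiableAt.differentiableWithinAt
      intro x hx
      rw [interior_Icc] at hx
      have hx' : x ∈ Set.Icc t₀ (0:ℝ) := Set.Ioo_subset_Icc_self hx
      rw [(hu x hx').deriv]
      have := hode x hx'
      nlinarith [sq_nonneg (u x)]
    have : u 0 ≤ u s := hanti hs h0mem hs.2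
    have : u 0 ≤ 0 := by linarith [hus0 ▸ this]
    exact this.trans (le_of_lt (by positivity))

/-- ODE comparison for the Riccati-type inequality `u' ≤ -2n u²`.  First part:
on `[t₀,0]` with `u ≥ 0` and `u(t₀) ≤ B` one gets `u(0) ≤ B/(1 + 2nB(0 - t₀))`.
Consequently, an ancient solution on `(-∞,0]` with `0 ≤ u ≤ B` satisfies `u(0) = 0`. -/
theorem riccati_ode_comparison (n : ℕ) (hn : 1 ≤ n) (B : ℝ) (hB : 0 < B) :
    (∀ t₀ : ℝ, t₀ ≤ 0 → ∀ u u' : ℝ → ℝ,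
      (∀ t ∈ Set.Icc t₀ (0 : ℝ), HasDerivAt u (u' t) t) →
      (∀ t ∈ Set.Icc t₀ (0 : ℝ), u' t ≤ -2 * (n : ℝ) * (u t) ^ 2) →
      (∀ t ∈ Set.Icc t₀ (0 : ℝ), 0 ≤ u t) →
      u t₀ ≤ B → u 0 ≤ B / (1 + 2 * (n : ℝ) * B * (0 - t₀))) ∧
    (∀ u u' : ℝ → ℝ,
      (∀ t ≤ (0 : ℝ), HasDerivAt u (u' t) t) →
      (∀ t ≤ (0 : ℝ), u' t ≤ -2 * (n : ℝ) * (u t) ^ 2) →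
      (∀ t ≤ (0 : ℝ), 0 ≤ u t ∧ u t ≤ B) →
      u 0 = 0) := by
  constructor
  · exact fun t₀ ht₀ u u' hu hode hpos hinit =>
      riccati_aux n B hB t₀ ht₀ u u' hu hode hpos hinit
  · intro u u' hu hode hbd
    have h0 : 0 ≤ u 0 := (hbd 0 le_rfl).1
    have hle : u 0 ≤ 0 := by
      apply le_of_forall_pos_le_add
      intro ε hε
      have hn1 : (0:ℝ) < (n:ℝ) := by exact_mod_cast hn
      set T : ℝ := 1 / (2 * (n:ℝ) * ε) with hT
      have hTpos : 0 < T := by positivity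
      have ht₀ : -T ≤ (0:ℝ) := by linarith
      have key := riccati_aux n B hB (-T) ht₀ u u'
        (fun t ht => hu t ht.2) (fun t ht => hode t ht.2)
        (fun t ht => (hbd t ht.2).1) (hbd (-T) ht₀).2
      have hD : 0 < 1 + 2 * (n:ℝ) * B * (0 - (-T)) := by
        nlinarith [mul_nonneg (by positivity : (0:ℝ) ≤ 2 * (n:ℝ) * B) (by linarith : (0:ℝ) ≤ 0 - (-T))]
      have : B / (1 + 2 * (n:ℝ) * B * (0 - (-T))) ≤ ε := by
        rw [div_le_iff₀ hD]
        have h1 : 2 * (n:ℝ) * B * (0 - (-T)) * ε = B := by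
          simp only [hT]; field_simp; ring
        nlinarith
      linarith
    linarith
end

section
/- Define Q(ζ) = ∫₁^ζ ((α²/2 + B(z))/(z B(z))) dz and A(ζ) = α⁴ ∫₀^ζ e^{-Q(w)} (∫₀^w e^{Q(z)}/B(z) dz) dw, where α > 0 and B : [0,∞) → (0,1] is continuous with B(z) = 1 - b₀² z² + o(z²) as z → 0 (b₀ > 0) and B(z) = z^{-2}(1 + o(1)) as z → ∞. Then A is well-defined (all integrals converge), A(ζ) = O(ζ²) as ζ → 0, and A(ζ) = α² ζ² (1 + o(1)) as ζ → ∞. Moreover A satisfies A''(ζ) + ((α²/2 + B(ζ))/(ζ B(ζ))) A'(ζ) = α⁴/B(ζ) on (0,∞). -/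
open Real Filter Asymptotics MeasureTheory Set

/-- `Q(ζ) = ∫₁^ζ (α²/2 + B(z))/(z B(z)) dz`. -/
noncomputable def tipQ (α : ℝ) (B : ℝ → ℝ) (ζ : ℝ) : ℝ :=
  ∫ z in (1:ℝ)..ζ, (α ^ 2 / 2 + B z) / (z * B z)

/-- `A(ζ) = α⁴ ∫₀^ζ e^{-Q(w)} (∫₀^w e^{Q(z)}/B(z) dz) dw`. -/
noncomputable def tipA (α : ℝ) (B : ℝ → ℝ) (ζ : ℝ) : ℝ :=
  α ^ 4 * ∫ w in (0:ℝ)..ζ,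
    Real.exp (-(tipQ α B w)) * ∫ z in (0:ℝ)..w, Real.exp (tipQ α B z) / B z

/-- the integrand of `tipQ`. -/
noncomputable def tipF (α : ℝ) (B : ℝ → ℝ) (z : ℝ) : ℝ := (α ^ 2 / 2 + B z) / (z * B z)

/-- inner integral. -/
noncomputable def tipG (α : ℝ) (B : ℝ → ℝ) (w : ℝ) : ℝ :=
  ∫ z in (0:ℝ)..w, Real.exp (tipQ α B z) / B z

/-- outer integrand. -/
noncomputable def tipH (α : ℝ) (B : ℝ → ℝ) (w : ℝ) : ℝ :=
  Real.exp (-(tipQ α B w)) * tipG α B w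

section aux
variable {α : ℝ} {B : ℝ → ℝ}

lemma tipF_contOn (hBcont : Continuous B) (hBpos : ∀ z, 0 < B z) :
    ContinuousOn (tipF α B) (Ioi 0) := by
  apply ContinuousOn.div (by fun_prop) (by fun_prop)
  intro z hz
  exact (mul_pos (mem_Ioi.1 hz) (hBpos z)).ne'

lemma tipF_pos (hBpos : ∀ z, 0 < B z) {z : ℝ} (hz : 0 < z) (hα : 0 < α) :
    0 < tipF α B z := by
  have h := hBpos z
  exact div_pos (by positivity) (mul_pos hz h)

lemma tipF_lb (hBpos : ∀ z, 0 < B z) (hBle : ∀ z, B z ≤ 1) {z : ℝ} (hz : 0 < z) :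
    (α ^ 2 / 2 + 1) / z ≤ tipF α B z := by
  unfold tipF
  rw [div_le_div_iff₀ hz (mul_pos hz (hBpos z))]
  have h1 : α ^ 2 / 2 * B z ≤ α ^ 2 / 2 := by
    nlinarith [hBle z, hBpos z, sq_nonneg α]
  nlinarith [hBpos z, hz]

lemma tipF_intble (hBcont : Continuous B) (hBpos : ∀ z, 0 < B z) {a b : ℝ}
    (ha : 0 < a) (hb : 0 < b) : IntervalIntegrable (tipF α B) volume a b := by
  apply ContinuousOn.intervalIntegrable
  apply (tipF_contOn hBcont hBpos).mono
  exact fun x hx => lt_of_lt_of_le (lt_min ha hb) hx.1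

end aux

section aux2
variable {α : ℝ} {B : ℝ → ℝ}

lemma tipQ_hasDerivAt (hBcont : Continuous B) (hBpos : ∀ z, 0 < B z) {x : ℝ} (hx : 0 < x) :
    HasDerivAt (tipQ α B) (tipF α B x) x := by
  exact intervalIntegral.integral_hasDerivAt_right (tipF_intble hBcont hBpos one_pos hx)
    ((tipF_contOn hBcont hBpos).stronglyMeasurableAtFilter isOpen_Ioi x hx)
    ((tipF_contOn hBcont hBpos).continuousAt (isOpen_Ioi.mem_nhds hx))

lemma tipQ_one : tipQ α B 1 = 0 := intervalIntegral.integral_same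

lemma tipQ_sub (hBcont : Continuous B) (hBpos : ∀ z, 0 < B z) {z w : ℝ}
    (hz : 0 < z) (hw : 0 < w) :
    tipQ α B w - tipQ α B z = ∫ x in z..w, tipF α B x := by
  have := intervalIntegral.integral_add_adjacent_intervals (a := 1) (b := z) (c := w) (f := tipF α B)
    (tipF_intble hBcont hBpos one_pos hz) (tipF_intble hBcont hBpos hz hw)
  have h2 : tipQ α B w = ∫ x in (1:ℝ)..w, tipF α B x := rfl
  have h3 : tipQ α B z = ∫ x in (1:ℝ)..z, tipF α B x := rfl
  rw [h2, h3, ← this]; ring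

lemma tipQ_lb (hBcont : Continuous B) (hBpos : ∀ z, 0 < B z) (hBle : ∀ z, B z ≤ 1)
    {z w : ℝ} (hz : 0 < z) (hzw : z ≤ w) :
    (α ^ 2 / 2 + 1) * (Real.log w - Real.log z) ≤ tipQ α B w - tipQ α B z := by
  have hw : 0 < w := lt_of_lt_of_le hz hzw
  rw [tipQ_sub hBcont hBpos hz hw]
  have key : ∫ x in z..w, (α ^ 2 / 2 + 1) * (1 / x)
      = (α ^ 2 / 2 + 1) * (Real.log w - Real.log z) := by
    rw [intervalIntegral.integral_const_mul, integral_one_div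
      (fun h => absurd ((uIcc_of_le hzw ▸ h).1) (not_le.2 hz)), Real.log_div hw.ne' hz.ne']
  rw [← key]
  apply intervalIntegral.integral_mono_on hzw _ (tipF_intble hBcont hBpos hz hw)
  · intro x hx
    have hx0 : 0 < x := lt_of_lt_of_le hz hx.1
    have := tipF_lb hBpos hBle hx0 (α := α)
    rw [mul_one_div]
    exact this
  · apply ContinuousOn.intervalIntegrable
    apply ContinuousOn.mul continuousOn_const
    apply ContinuousOn.div continuousOn_const continuousOn_id
    intro x hx
    rw [uIcc_of_le hzw] at hx
    exact (lt_of_lt_of_le hz hx.1).ne'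

lemma tipQ_mono (hBcont : Continuous B) (hBpos : ∀ z, 0 < B z) (hBle : ∀ z, B z ≤ 1)
    {z w : ℝ} (hz : 0 < z) (hzw : z ≤ w) : tipQ α B z ≤ tipQ α B w := by
  have := tipQ_lb (α := α) hBcont hBpos hBle hz hzw
  have hlog : Real.log z ≤ Real.log w := Real.log_le_log hz hzw
  nlinarith [sq_nonneg α]

end aux2

section aux3
variable {α : ℝ} {B : ℝ → ℝ}

lemma intble_of_bound {φ : ℝ → ℝ} {ζ C : ℝ} (hζ : 0 < ζ)
    (hc : ContinuousOn φ (Ioi 0)) (hb : ∀ x ∈ Ioc 0 ζ, ‖φ x‖ ≤ C) :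
    IntervalIntegrable φ volume 0 ζ := by
  rw [intervalIntegrable_iff, uIoc_of_le hζ.le]
  apply Integrable.mono' (g := fun _ => C) ((integrableOn_const_iff).2 (Or.inr measure_Ioc_lt_top))
    ((hc.mono Ioc_subset_Ioi_self).aestronglyMeasurable measurableSet_Ioc)
  exact (ae_restrict_iff' measurableSet_Ioc).2 (ae_of_all _ hb)

lemma tipQ_contOn (hBcont : Continuous B) (hBpos : ∀ z, 0 < B z) :
    ContinuousOn (tipQ α B) (Ioi 0) := fun x hx =>
  ((tipQ_hasDerivAt hBcont hBpos hx).continuousAt).continuousWithinAt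

lemma tipg_contOn (hBcont : Continuous B) (hBpos : ∀ z, 0 < B z) :
    ContinuousOn (fun z => Real.exp (tipQ α B z) / B z) (Ioi 0) :=
  ((tipQ_contOn hBcont hBpos).rexp).div hBcont.continuousOn (fun z _ => (hBpos z).ne')

lemma B_min (hBcont : Continuous B) (hBpos : ∀ z, 0 < B z) {ζ : ℝ} (hζ : 0 ≤ ζ) :
    ∃ m > 0, ∀ z ∈ Icc 0 ζ, m ≤ B z := by
  obtain ⟨x₀, hx₀, hmin⟩ := isCompact_Icc.exists_isMinOn (nonempty_Icc.2 hζ)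
    hBcont.continuousOn
  exact ⟨B x₀, hBpos x₀, fun z hz => hmin hz⟩

lemma tipg_intble (hBcont : Continuous B) (hBpos : ∀ z, 0 < B z) (hBle : ∀ z, B z ≤ 1)
    {ζ : ℝ} (hζ : 0 < ζ) :
    IntervalIntegrable (fun z => Real.exp (tipQ α B z) / B z) volume 0 ζ := by
  obtain ⟨m, hm, hmB⟩ := B_min hBcont hBpos hζ.le
  apply intble_of_bound hζ (tipg_contOn hBcont hBpos)
  intro x hx
  have hg0 : 0 < Real.exp (tipQ α B x) / B x := div_pos (Real.exp_pos _) (hBpos x)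
  rw [Real.norm_eq_abs, abs_of_pos hg0]
  exact div_le_div₀ (Real.exp_pos _).le
    (Real.exp_le_exp.2 (tipQ_mono hBcont hBpos hBle hx.1 hx.2)) hm
    (hmB x ⟨hx.1.le, hx.2⟩)

lemma tipG_hasDerivAt (hBcont : Continuous B) (hBpos : ∀ z, 0 < B z) (hBle : ∀ z, B z ≤ 1)
    {w : ℝ} (hw : 0 < w) :
    HasDerivAt (tipG α B) (Real.exp (tipQ α B w) / B w) w :=
  intervalIntegral.integral_hasDerivAt_right (tipg_intble hBcont hBpos hBle hw)
    ((tipg_contOn hBcont hBpos).stronglyMeasurableAtFilter isOpen_Ioi w hw)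
    ((tipg_contOn hBcont hBpos).continuousAt (isOpen_Ioi.mem_nhds hw))

lemma tipG_nonneg (hBpos : ∀ z, 0 < B z) {w : ℝ} (hw : 0 ≤ w) : 0 ≤ tipG α B w :=
  intervalIntegral.integral_nonneg hw
    (fun x _ => (div_pos (Real.exp_pos _) (hBpos x)).le)

lemma tipH_contOn (hBcont : Continuous B) (hBpos : ∀ z, 0 < B z) (hBle : ∀ z, B z ≤ 1) :
    ContinuousOn (tipH α B) (Ioi 0) := by
  apply ContinuousOn.mul ((tipQ_contOn hBcont hBpos).neg.rexp)
  exact fun w hw => ((tipG_hasDerivAt hBcont hBpos hBle hw).continuousAt).continuousWithinAt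

end aux3

section aux4
variable {α : ℝ} {B : ℝ → ℝ}

lemma tipH_le (hBcont : Continuous B) (hBpos : ∀ z, 0 < B z) (hBle : ∀ z, B z ≤ 1)
    {ζ m : ℝ} (hζ : 0 < ζ) (hm : 0 < m) (hmB : ∀ z ∈ Icc 0 ζ, m ≤ B z)
    {w : ℝ} (hw : w ∈ Ioc 0 ζ) :
    tipH α B w ≤ w / (m * (α ^ 2 / 2 + 1 + 1)) := by
  set c : ℝ := α ^ 2 / 2 + 1 with hc
  have hc0 : (0:ℝ) < c := by positivity
  have hw0 : 0 < w := hw.1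
  have hwc : (0:ℝ) < w ^ c := Real.rpow_pos_of_pos hw0 c
  -- rewrite tipH as a single integral over Ioc 0 w
  have h1 : tipH α B w
      = ∫ z in Ioc 0 w, Real.exp (-(tipQ α B w)) * (Real.exp (tipQ α B z) / B z) := by
    rw [tipH, tipG, ← intervalIntegral.integral_const_mul,
      intervalIntegral.integral_of_le hw0.le]
  have hgI : IntegrableOn (fun z => Real.exp (tipQ α B z) / B z) (Ioc 0 w) := by
    have := tipg_intble hBcont hBpos hBle hw0 (α := α)
    rwa [intervalIntegrable_iff, uIoc_of_le hw0.le] at this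
  have hbcont : Continuous (fun z : ℝ => z ^ c / (w ^ c * m)) := by
    apply Continuous.div_const
    exact continuous_iff_continuousAt.2 fun x => Real.continuousAt_rpow_const x c (Or.inr hc0.le)
  have hbI : IntegrableOn (fun z : ℝ => z ^ c / (w ^ c * m)) (Ioc 0 w) :=
    hbcont.integrableOn_Ioc
  have h2 : ∫ z in Ioc 0 w, Real.exp (-(tipQ α B w)) * (Real.exp (tipQ α B z) / B z)
      ≤ ∫ z in Ioc 0 w, z ^ c / (w ^ c * m) := by
    apply setIntegral_mono_on (hgI.const_mul _) hbI measurableSet_Ioc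
    intro z hz
    have hz0 : 0 < z := hz.1
    have hzw : z ≤ w := hz.2
    have hQ : c * (Real.log w - Real.log z) ≤ tipQ α B w - tipQ α B z :=
      tipQ_lb hBcont hBpos hBle hz0 hzw
    have hexp : Real.exp (tipQ α B z - tipQ α B w) ≤ z ^ c / w ^ c := by
      rw [Real.rpow_def_of_pos hz0, Real.rpow_def_of_pos hw0, ← Real.exp_sub]
      apply Real.exp_le_exp.2
      nlinarith [hQ]
    have hmz : m ≤ B z := hmB z ⟨hz0.le, hzw.trans hw.2⟩
    calc Real.exp (-(tipQ α B w)) * (Real.exp (tipQ α B z) / B z)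
        = Real.exp (tipQ α B z - tipQ α B w) / B z := by
          rw [Real.exp_sub]; field_simp [Real.exp_neg]
          rw [← Real.exp_add, neg_add_cancel, Real.exp_zero]
      _ ≤ (z ^ c / w ^ c) / m := div_le_div₀ (by positivity) hexp hm hmz
      _ = z ^ c / (w ^ c * m) := by rw [div_div]
  have h3 : ∫ z in Ioc 0 w, z ^ c / (w ^ c * m) = w / (m * (c + 1)) := by
    rw [← intervalIntegral.integral_of_le hw0.le]
    have : ∀ z : ℝ, z ^ c / (w ^ c * m) = (w ^ c * m)⁻¹ * z ^ c := fun z => by ring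
    simp_rw [this]
    rw [intervalIntegral.integral_const_mul, integral_rpow (Or.inl (by linarith)),
      Real.zero_rpow (by positivity), sub_zero]
    have hsplit : w ^ (c + 1) = w ^ c * w := by
      rw [Real.rpow_add hw0, Real.rpow_one]
    rw [hsplit, mul_inv]
    rw [show (w ^ c)⁻¹ * m⁻¹ * (w ^ c * w / (c + 1))
        = (w ^ c)⁻¹ * w ^ c * (m⁻¹ * (w / (c + 1))) by ring,
      inv_mul_cancel₀ hwc.ne', one_mul, eq_div_iff (by positivity : (0:ℝ) < m * (c+1)).ne']
    field_simp
  calc tipH α B w ≤ ∫ z in Ioc 0 w, z ^ c / (w ^ c * m) := h1 ▸ h2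
    _ = w / (m * (c + 1)) := h3

lemma tipH_nonneg (hBpos : ∀ z, 0 < B z) {w : ℝ} (hw : 0 ≤ w) : 0 ≤ tipH α B w :=
  mul_nonneg (Real.exp_pos _).le (tipG_nonneg hBpos hw)

lemma tipH_intble (hBcont : Continuous B) (hBpos : ∀ z, 0 < B z) (hBle : ∀ z, B z ≤ 1)
    {ζ : ℝ} (hζ : 0 < ζ) : IntervalIntegrable (tipH α B) volume 0 ζ := by
  obtain ⟨m, hm, hmB⟩ := B_min hBcont hBpos hζ.le
  apply intble_of_bound hζ (tipH_contOn hBcont hBpos hBle)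
  intro x hx
  rw [Real.norm_eq_abs, abs_of_nonneg (tipH_nonneg hBpos hx.1.le)]
  calc tipH α B x ≤ x / (m * (α ^ 2 / 2 + 1 + 1)) := tipH_le hBcont hBpos hBle hζ hm hmB hx
    _ ≤ ζ / (m * (α ^ 2 / 2 + 1 + 1)) := by gcongr; exact hx.2

end aux4

section aux5
variable {α : ℝ} {B : ℝ → ℝ}

lemma tipA_eq (ζ : ℝ) : tipA α B ζ = α ^ 4 * ∫ w in (0:ℝ)..ζ, tipH α B w := rfl

lemma tipA_hasDerivAt (hBcont : Continuous B) (hBpos : ∀ z, 0 < B z) (hBle : ∀ z, B z ≤ 1)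
    {ζ : ℝ} (hζ : 0 < ζ) : HasDerivAt (tipA α B) (α ^ 4 * tipH α B ζ) ζ := by
  have : HasDerivAt (fun x => ∫ w in (0:ℝ)..x, tipH α B w) (tipH α B ζ) ζ :=
    intervalIntegral.integral_hasDerivAt_right (tipH_intble hBcont hBpos hBle hζ)
      ((tipH_contOn hBcont hBpos hBle).stronglyMeasurableAtFilter isOpen_Ioi ζ hζ)
      ((tipH_contOn hBcont hBpos hBle).continuousAt (isOpen_Ioi.mem_nhds hζ))
  exact this.const_mul _

lemma tipH_hasDerivAt (hBcont : Continuous B) (hBpos : ∀ z, 0 < B z) (hBle : ∀ z, B z ≤ 1)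
    {w : ℝ} (hw : 0 < w) :
    HasDerivAt (tipH α B) (-(tipF α B w) * tipH α B w + 1 / B w) w := by
  have h1 := (((tipQ_hasDerivAt (α := α) hBcont hBpos hw).neg).exp).mul
    (tipG_hasDerivAt (α := α) hBcont hBpos hBle hw)
  have e1 : Real.exp (-(tipQ α B w)) * (Real.exp (tipQ α B w) / B w) = 1 / B w := by
    rw [Real.exp_neg]
    field_simp
  convert h1 using 1
  · rfl
  · rfl
  · rfl
  rw [tipH, ← e1]
  rw [Pi.neg_apply]
  ring

end aux5

open intervalIntegral in
lemma lhopital_atTop {u v u' v' : ℝ → ℝ} {a L : ℝ}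
    (hu : ∀ x ∈ Ici a, HasDerivAt u (u' x) x)
    (hv : ∀ x ∈ Ici a, HasDerivAt v (v' x) x)
    (hu'c : ContinuousOn u' (Ici a)) (hv'c : ContinuousOn v' (Ici a))
    (hv'pos : ∀ x ∈ Ici a, 0 < v' x)
    (hvtop : Tendsto v atTop atTop)
    (hlim : Tendsto (fun x => u' x / v' x) atTop (nhds L)) :
    Tendsto (fun x => u x / v x) atTop (nhds L) := by
  rw [Metric.tendsto_nhds]
  intro ε hε
  have hε' : 0 < ε / 3 := by linarith
  set ε' := ε / 3 with hε'def
  have h1 : ∀ᶠ x in atTop, |u' x / v' x - L| < ε' := by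
    have := Metric.tendsto_nhds.1 hlim ε' hε'
    simpa [Real.dist_eq] using this
  obtain ⟨b, hb⟩ := eventually_atTop.1 (h1.and (eventually_ge_atTop a))
  set c := max b a with hcdef
  have hca : a ≤ c := le_max_right _ _
  have hc : ∀ x ≥ c, |u' x / v' x - L| < ε' ∧ a ≤ x :=
    fun x hx => hb x ((le_max_left b a).trans hx)
  have hd : ∀ x ≥ c, |u' x - L * v' x| ≤ ε' * v' x := by
    intro x hx
    have hax := (hc x hx).2
    have hvp := hv'pos x hax
    have e : u' x - L * v' x = (u' x / v' x - L) * v' x := by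
      rw [sub_mul, div_mul_cancel₀ _ hvp.ne']
    rw [e, abs_mul, abs_of_pos hvp]
    exact mul_le_mul_of_nonneg_right (hc x hx).1.le hvp.le
  set K := |u c - L * v c| + ε' * |v c| with hKdef
  have key : ∀ x ≥ c, |u x - L * v x| ≤ K + ε' * v x := by
    intro x hx
    have hsub : ∀ t ∈ Icc c x, a ≤ t := fun t ht => hca.trans ht.1
    have huIcc : uIcc c x = Icc c x := uIcc_of_le hx
    have hiu : IntervalIntegrable u' volume c x := by
      apply (hu'c.mono _).intervalIntegrable
      rw [huIcc]; exact fun t ht => hsub t ht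
    have hiv : IntervalIntegrable v' volume c x := by
      apply (hv'c.mono _).intervalIntegrable
      rw [huIcc]; exact fun t ht => hsub t ht
    have hFTCu : ∫ t in c..x, u' t = u x - u c :=
      integral_eq_sub_of_hasDerivAt (fun t ht => hu t (hsub t (huIcc ▸ ht))) hiu
    have hFTCv : ∫ t in c..x, v' t = v x - v c :=
      integral_eq_sub_of_hasDerivAt (fun t ht => hv t (hsub t (huIcc ▸ ht))) hiv
    have h2 : ∫ t in c..x, (u' t - L * v' t) = (u x - L * v x) - (u c - L * v c) := by
      rw [integral_sub hiu (hiv.const_mul L), hFTCu, intervalIntegral.integral_const_mul, hFTCv]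
      ring
    have h3 : |∫ t in c..x, (u' t - L * v' t)| ≤ ε' * (v x - v c) := by
      calc |∫ t in c..x, (u' t - L * v' t)| ≤ ∫ t in c..x, |u' t - L * v' t| :=
            abs_integral_le_integral_abs hx
        _ ≤ ∫ t in c..x, ε' * v' t := by
            apply integral_mono_on hx ((hiu.sub (hiv.const_mul L)).abs) (hiv.const_mul ε')
            exact fun t ht => hd t ht.1
        _ = ε' * (v x - v c) := by rw [intervalIntegral.integral_const_mul, hFTCv]
    rw [h2] at h3
    have habs : |u x - L * v x| ≤ |(u x - L * v x) - (u c - L * v c)| + |u c - L * v c| := by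
      have := abs_add_le ((u x - L * v x) - (u c - L * v c)) (u c - L * v c)
      simpa using this
    nlinarith [neg_abs_le (v c), hε'.le, habs, h3]
  have hvx : ∀ᶠ x in atTop, max 1 (K / ε') < v x := hvtop.eventually_gt_atTop _
  filter_upwards [hvx, eventually_ge_atTop c] with x hx1 hx2
  have hv1 : (1:ℝ) < v x := lt_of_le_of_lt (le_max_left _ _) hx1
  have hv0 : 0 < v x := lt_trans one_pos hv1
  have hK0 : 0 ≤ K := by positivity
  have hKv : K / v x < ε' := by
    rw [div_lt_iff₀ hv0]
    have : K / ε' < v x := lt_of_le_of_lt (le_max_right _ _) hx1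
    rw [div_lt_iff₀ hε'] at this
    linarith
  rw [Real.dist_eq]
  have e : u x / v x - L = (u x - L * v x) / v x := by
    rw [eq_div_iff hv0.ne', sub_mul, div_mul_cancel₀ _ hv0.ne']
  rw [e, abs_div, abs_of_pos hv0]
  calc |u x - L * v x| / v x ≤ (K + ε' * v x) / v x := by gcongr; exact key x hx2
    _ = K / v x + ε' := by rw [add_div, mul_div_cancel_right₀ _ hv0.ne']
    _ < ε' + ε' := by linarith
    _ < ε := by rw [hε'def]; linarith

section aux6
variable {α : ℝ} {B : ℝ → ℝ}

lemma B_tendsto_zero (hBinf : Tendsto (fun z : ℝ => z ^ 2 * B z) atTop (nhds 1)) :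
    Tendsto B atTop (nhds 0) := by
  have h1 : Tendsto (fun z : ℝ => (z ^ 2 * B z) * (z ^ 2)⁻¹) atTop (nhds (1 * 0)) := by
    apply hBinf.mul
    exact (tendsto_pow_atTop two_ne_zero).inv_tendsto_atTop
  rw [one_mul] at h1
  apply h1.congr'
  filter_upwards [eventually_gt_atTop (0:ℝ)] with z hz
  field_simp

lemma tipH_div_tendsto (hα : 0 < α) (hBcont : Continuous B) (hBpos : ∀ z, 0 < B z)
    (hBle : ∀ z, B z ≤ 1)
    (hBinf : Tendsto (fun z : ℝ => z ^ 2 * B z) atTop (nhds 1)) :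
    Tendsto (fun ζ => (α ^ 4 * tipH α B ζ) / (α ^ 2 * (2 * ζ))) atTop (nhds 1) := by
  have hα2 : (0:ℝ) < α ^ 2 := by positivity
  set u : ℝ → ℝ := tipG α B with hu_def
  set v : ℝ → ℝ := fun ζ => Real.exp (tipQ α B ζ) * (2 / α ^ 2 * ζ) with hv_def
  set u' : ℝ → ℝ := fun ζ => Real.exp (tipQ α B ζ) / B ζ with hu'_def
  set v' : ℝ → ℝ := fun ζ => Real.exp (tipQ α B ζ) * (1 / B ζ + 4 / α ^ 2) with hv'_def
  have hzpos : ∀ x ∈ Ici (1:ℝ), (0:ℝ) < x := fun x hx => lt_of_lt_of_le one_pos hx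
  have hu : ∀ x ∈ Ici (1:ℝ), HasDerivAt u (u' x) x := fun x hx =>
    tipG_hasDerivAt hBcont hBpos hBle (hzpos x hx)
  have hv : ∀ x ∈ Ici (1:ℝ), HasDerivAt v (v' x) x := by
    intro x hx
    have hx0 := hzpos x hx
    have hB := hBpos x
    have h1 := ((tipQ_hasDerivAt (α := α) hBcont hBpos hx0).exp).mul
      ((hasDerivAt_id x).const_mul (2 / α ^ 2))
    have key : tipF α B x * (2 / α ^ 2 * x) + 2 / α ^ 2 = 1 / B x + 4 / α ^ 2 := by
      rw [tipF]
      field_simp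
      ring
    convert h1 using 1
    · rfl
    · rfl
    · rfl
    simp only [hv'_def]
    rw [← key]
    simp only [id_eq]
    ring
  have hu'c : ContinuousOn u' (Ici 1) :=
    (tipg_contOn hBcont hBpos).mono fun x hx => hzpos x hx
  have hv'c : ContinuousOn v' (Ici 1) := by
    apply ContinuousOn.mul (((tipQ_contOn hBcont hBpos).mono fun x hx => hzpos x hx).rexp)
    apply ContinuousOn.add _ continuousOn_const
    exact ContinuousOn.div continuousOn_const hBcont.continuousOn fun x _ => (hBpos x).ne'
  have hv'pos : ∀ x ∈ Ici (1:ℝ), 0 < v' x := by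
    intro x hx
    have hBx := hBpos x
    have : 0 < 1 / B x + 4 / α ^ 2 := by positivity
    exact mul_pos (Real.exp_pos _) this
  have hvtop : Tendsto v atTop atTop := by
    apply tendsto_atTop_mono' atTop (f₁ := fun ζ => 2 / α ^ 2 * ζ)
    · filter_upwards [eventually_ge_atTop (1:ℝ)] with ζ hζ
      have hQ : 0 ≤ tipQ α B ζ := by
        have := tipQ_mono (α := α) hBcont hBpos hBle one_pos hζ
        rwa [tipQ_one] at this
      have he : 1 ≤ Real.exp (tipQ α B ζ) := Real.one_le_exp hQ
      have hζ0 : 0 ≤ 2 / α ^ 2 * ζ := by positivity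
      calc 2 / α ^ 2 * ζ = 1 * (2 / α ^ 2 * ζ) := (one_mul _).symm
        _ ≤ Real.exp (tipQ α B ζ) * (2 / α ^ 2 * ζ) := mul_le_mul_of_nonneg_right he hζ0
    · exact (tendsto_id.const_mul_atTop (by positivity)).comp tendsto_id
  have hlim : Tendsto (fun x => u' x / v' x) atTop (nhds 1) := by
    have h0 : Tendsto (fun x => (1 + 4 * B x / α ^ 2)⁻¹) atTop (nhds 1) := by
      have hden : Tendsto (fun x => 1 + 4 * B x / α ^ 2) atTop (nhds 1) := by
        have := ((B_tendsto_zero hBinf).const_mul 4).div_const (α ^ 2)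
        have h2 := tendsto_const_nhds (α := ℝ) (x := (1:ℝ)) (f := atTop).add this
        simpa using h2
      have := hden.inv₀ one_ne_zero
      simpa using this
    apply h0.congr
    intro x
    have hBx := hBpos x
    have hex := (Real.exp_pos (tipQ α B x)).ne'
    rw [hu'_def, hv'_def]
    field_simp
  have hmain := lhopital_atTop hu hv hu'c hv'c hv'pos hvtop hlim
  apply hmain.congr'
  filter_upwards [eventually_ge_atTop (1:ℝ)] with ζ hζ
  have hζ0 : (0:ℝ) < ζ := lt_of_lt_of_le one_pos hζ
  have hex := (Real.exp_pos (tipQ α B ζ)).ne'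
  rw [hu_def, hv_def, tipH, Real.exp_neg]
  field_simp

end aux6

/-- With `B` a Bryant-soliton-type profile (`B(z) = 1 - b₀²z² + o(z²)` at `0`,
`B(z) = z⁻²(1+o(1))` at `∞`, `0 < B ≤ 1`), the function `A` is well defined,
`A(ζ) = O(ζ²)` as `ζ → 0⁺`, `A(ζ) = α²ζ²(1+o(1))` as `ζ → ∞`, and `A` solves
`A'' + ((α²/2 + B)/(ζB)) A' = α⁴/B` on `(0,∞)`. -/
theorem tipA_properties (α b₀ : ℝ) (hα : 0 < α) (hb₀ : 0 < b₀)
    (B : ℝ → ℝ) (hBcont : Continuous B)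
    (hBpos : ∀ z : ℝ, 0 < B z) (hBle : ∀ z : ℝ, B z ≤ 1)
    (hB0 : (fun z : ℝ => B z - (1 - b₀ ^ 2 * z ^ 2)) =o[nhdsWithin 0 (Set.Ioi 0)]
      fun z : ℝ => z ^ 2)
    (hBinf : Tendsto (fun z : ℝ => z ^ 2 * B z) atTop (nhds 1)) :
    (∀ ζ : ℝ, 0 < ζ →
        IntervalIntegrable (fun z => Real.exp (tipQ α B z) / B z) MeasureTheory.volume 0 ζ ∧
        IntervalIntegrable
          (fun w => Real.exp (-(tipQ α B w)) * ∫ z in (0:ℝ)..w, Real.exp (tipQ α B z) / B z)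
          MeasureTheory.volume 0 ζ) ∧
    (tipA α B) =O[nhdsWithin 0 (Set.Ioi 0)] (fun ζ : ℝ => ζ ^ 2) ∧
    Tendsto (fun ζ : ℝ => tipA α B ζ / (α ^ 2 * ζ ^ 2)) atTop (nhds 1) ∧
    (∀ ζ : ℝ, 0 < ζ →
      deriv (deriv (tipA α B)) ζ
        + ((α ^ 2 / 2 + B ζ) / (ζ * B ζ)) * deriv (tipA α B) ζ = α ^ 4 / B ζ) := by
  have hα2 : (0:ℝ) < α ^ 2 := by positivity
  refine ⟨fun ζ hζ => ⟨tipg_intble hBcont hBpos hBle hζ,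
      tipH_intble hBcont hBpos hBle hζ⟩, ?_, ?_, ?_⟩
  · -- big-O at 0
    obtain ⟨m, hm, hmB⟩ := B_min (ζ := 1) hBcont hBpos zero_le_one
    set C0 : ℝ := (m * (α ^ 2 / 2 + 1 + 1))⁻¹ with hC0
    have hC0pos : 0 < C0 := by positivity
    rw [isBigO_iff]
    refine ⟨α ^ 4 * C0 / 2, ?_⟩
    filter_upwards [Ioo_mem_nhdsGT_of_mem (⟨le_refl (0:ℝ), one_pos⟩ : (0:ℝ) ∈ Ico (0:ℝ) 1)]
      with ζ hζ
    have hζ0 : 0 < ζ := hζ.1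
    have hζ1 : ζ < 1 := hζ.2
    have hup : ∀ w ∈ Icc 0 ζ, tipH α B w ≤ C0 * w := by
      intro w hw
      rcases eq_or_lt_of_le hw.1 with h | h
      · rw [← h]
        simp [tipH, tipG]
      · have hw' : w ∈ Ioc 0 1 := ⟨h, hw.2.trans hζ1.le⟩
        calc tipH α B w ≤ w / (m * (α ^ 2 / 2 + 1 + 1)) :=
              tipH_le hBcont hBpos hBle one_pos hm hmB hw'
          _ = C0 * w := by rw [div_eq_inv_mul]
    have hint := tipH_intble (α := α) hBcont hBpos hBle hζ0
    have hintC : IntervalIntegrable (fun w => C0 * w) volume 0 ζ :=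
      (continuous_const.mul continuous_id).intervalIntegrable _ _
    have h1 : tipA α B ζ ≤ α ^ 4 * (C0 * (ζ ^ 2 / 2)) := by
      rw [tipA_eq]
      apply mul_le_mul_of_nonneg_left _ (by positivity : (0:ℝ) ≤ α ^ 4)
      calc ∫ w in (0:ℝ)..ζ, tipH α B w ≤ ∫ w in (0:ℝ)..ζ, C0 * w :=
            intervalIntegral.integral_mono_on hζ0.le hint hintC hup
        _ = C0 * (ζ ^ 2 / 2) := by
            rw [intervalIntegral.integral_const_mul, integral_id]
            ring
    have h0 : 0 ≤ tipA α B ζ := by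
      rw [tipA_eq]
      apply mul_nonneg (by positivity)
      exact intervalIntegral.integral_nonneg hζ0.le fun w hw => tipH_nonneg hBpos hw.1
    rw [Real.norm_eq_abs, Real.norm_eq_abs, abs_of_nonneg h0,
      abs_of_nonneg (by positivity : (0:ℝ) ≤ ζ ^ 2)]
    calc tipA α B ζ ≤ α ^ 4 * (C0 * (ζ ^ 2 / 2)) := h1
      _ = α ^ 4 * C0 / 2 * ζ ^ 2 := by ring
  · -- asymptotics at infinity
    have step1 := tipH_div_tendsto hα hBcont hBpos hBle hBinf
    apply lhopital_atTop (a := 1) (u' := fun ζ => α ^ 4 * tipH α B ζ)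
      (v' := fun ζ => α ^ 2 * (2 * ζ))
    · exact fun x hx => tipA_hasDerivAt hBcont hBpos hBle (lt_of_lt_of_le one_pos hx)
    · intro x hx
      have h := (hasDerivAt_pow 2 x).const_mul (α ^ 2)
      convert h using 1
      · rfl
      · rfl
      simp
    · exact continuousOn_const.mul
        ((tipH_contOn hBcont hBpos hBle).mono fun x hx => mem_Ioi.2 (lt_of_lt_of_le one_pos hx))
    · exact (continuous_const.mul (continuous_const.mul continuous_id)).continuousOn
    · intro x hx
      have hx0 : (0:ℝ) < x := lt_of_lt_of_le one_pos hx
      positivity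
    · exact Tendsto.const_mul_atTop hα2 (tendsto_pow_atTop two_ne_zero)
    · exact step1
  · -- the ODE
    intro ζ hζ
    have hd1 : ∀ x ∈ Ioi (0:ℝ), deriv (tipA α B) x = α ^ 4 * tipH α B x := fun x hx =>
      (tipA_hasDerivAt hBcont hBpos hBle hx).deriv
    have hEq : deriv (tipA α B) =ᶠ[nhds ζ] fun x => α ^ 4 * tipH α B x :=
      Filter.eventuallyEq_of_mem (isOpen_Ioi.mem_nhds hζ) hd1
    have h2 : deriv (deriv (tipA α B)) ζ
        = α ^ 4 * (-(tipF α B ζ) * tipH α B ζ + 1 / B ζ) := by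
      rw [hEq.deriv_eq]
      exact ((tipH_hasDerivAt hBcont hBpos hBle hζ).const_mul (α ^ 4)).deriv
    have h3 : deriv (tipA α B) ζ = α ^ 4 * tipH α B ζ := hd1 ζ hζ
    have h4 : ((α ^ 2 / 2 + B ζ) / (ζ * B ζ)) = tipF α B ζ := rfl
    rw [h2, h3, h4, tipF]
    have hBζ := (hBpos ζ).ne'
    field_simp
    ring
end

section
/- Let α > 0, k > 0, and set v₀(r) = k² / (-log r) and h₀(r) = k^{-2} r² (-log r) for r ∈ (0,1). Then as r → 0⁺: r² (α² r^{-2} v₀(1 - v₀) + (α²/2) r^{-1} v₀'(r) + v₀ v₀'' - (1/2)(v₀')² - r^{-1} v₀ v₀') = α² v₀(r) (1 + O(|log r|^{-1})). -/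
open Real Filter Asymptotics

/-- First derivative of `v₀`. -/
lemma outer_v0_hasDerivAt (k x : ℝ) (hx : 0 < x) (hx1 : x < 1) :
    HasDerivAt (fun x : ℝ => k ^ 2 / (-Real.log x))
      (k ^ 2 / (x * (Real.log x) ^ 2)) x := by
  have hL : Real.log x < 0 := Real.log_neg hx hx1
  have h1 : HasDerivAt (fun x : ℝ => -Real.log x) (-x⁻¹) x :=
    (Real.hasDerivAt_log hx.ne').neg
  have h2 : HasDerivAt (fun x : ℝ => (-Real.log x)⁻¹)
      (-(-x⁻¹) / (-Real.log x) ^ 2) x := h1.inv (by simpa using hL.ne)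
  have h3 := h2.const_mul (k ^ 2)
  simp only [div_eq_mul_inv]
  convert h3 using 1
  · rfl
  · rfl
  field_simp
/-- Derivative of the auxiliary function appearing as `v₀'`. -/
lemma outer_v0'_hasDerivAt (k x : ℝ) (hx : 0 < x) (hx1 : x < 1) :
    HasDerivAt (fun x : ℝ => k ^ 2 / (x * (Real.log x) ^ 2))
      (-(k ^ 2) * (Real.log x + 2) / (x ^ 2 * (Real.log x) ^ 3)) x := by
  have hL : Real.log x < 0 := Real.log_neg hx hx1
  have hu : HasDerivAt (fun x : ℝ => x * (Real.log x) ^ 2)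
      ((Real.log x) ^ 2 + x * (2 * Real.log x ^ 1 * x⁻¹)) x := by
    have := (hasDerivAt_id' (x := x)).mul ((Real.hasDerivAt_log hx.ne').pow 2)
    convert this using 1
    · rfl
    · rfl
    · rfl
    simp only [Pi.pow_apply]
    push_cast
    ring
  have hne : x * (Real.log x) ^ 2 ≠ 0 :=
    mul_ne_zero hx.ne' (pow_ne_zero 2 hL.ne)
  have h2 := hu.inv hne
  have h3 := h2.const_mul (k ^ 2)
  simp only [div_eq_mul_inv]
  convert h3 using 1
  · rfl
  · rfl
  · rfl
  rw [div_eq_mul_inv]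
  field_simp [hx.ne', hL.ne]

/-- Leading-order computation in the outer region for `v₀ = k²|log r|⁻¹`,
`h₀ = k⁻²r²|log r|`: the quantity
`r²(α²r⁻²v₀(1-v₀) + (α²/2)r⁻¹v₀' + v₀v₀'' - (1/2)(v₀')² - r⁻¹v₀v₀')`
equals `α² v₀ (1 + O(|log r|⁻¹))` as `r → 0⁺`. -/
theorem outer_region_v_leading_term (α k : ℝ) (hα : 0 < α) (hk : 0 < k) :
    ∃ E : ℝ → ℝ,
      E =O[nhdsWithin 0 (Set.Ioi 0)] (fun r : ℝ => |Real.log r|⁻¹) ∧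
      ∀ᶠ r in nhdsWithin (0:ℝ) (Set.Ioi 0),
        r ^ 2 *
          (α ^ 2 * r ^ (-2 : ℤ) * (k ^ 2 / (-Real.log r)) * (1 - k ^ 2 / (-Real.log r))
            + (α ^ 2 / 2) * r⁻¹ * deriv (fun x : ℝ => k ^ 2 / (-Real.log x)) r
            + (k ^ 2 / (-Real.log r)) *
                deriv (deriv (fun x : ℝ => k ^ 2 / (-Real.log x))) r
            - (1 / 2) * (deriv (fun x : ℝ => k ^ 2 / (-Real.log x)) r) ^ 2
            - r⁻¹ * (k ^ 2 / (-Real.log r)) *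
                deriv (fun x : ℝ => k ^ 2 / (-Real.log x)) r)
        = α ^ 2 * (k ^ 2 / (-Real.log r)) * (1 + E r) := by
  set E : ℝ → ℝ := fun r =>
    (k ^ 2 - 1 / 2) / Real.log r - (2 * k ^ 2 / α ^ 2) / (Real.log r) ^ 2
      - (3 * k ^ 2 / (2 * α ^ 2)) / (Real.log r) ^ 3 with hE
  have hmem : Set.Ioo (0 : ℝ) (Real.exp (-1)) ∈ nhdsWithin (0:ℝ) (Set.Ioi 0) :=
    Ioo_mem_nhdsGT_of_mem (by simp [Real.exp_pos (-1)])
  refine ⟨E, ?_, ?_⟩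
  · rw [isBigO_iff]
    refine ⟨|k ^ 2 - 1 / 2| + |2 * k ^ 2 / α ^ 2| + |3 * k ^ 2 / (2 * α ^ 2)|, ?_⟩
    filter_upwards [hmem] with r hr
    obtain ⟨hr0, hr1⟩ := hr
    have hL : Real.log r < -1 := by
      have := Real.log_lt_log hr0 hr1
      simpa using this
    have h1 : (1 : ℝ) ≤ |Real.log r| := by
      rw [abs_of_neg (by linarith)]; linarith
    have h0 : (0 : ℝ) < |Real.log r| := by linarith
    have b1 : |(k ^ 2 - 1 / 2) / Real.log r| = |k ^ 2 - 1 / 2| * |Real.log r|⁻¹ := by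
      rw [abs_div, div_eq_mul_inv]
    have i2 : (|Real.log r| ^ 2)⁻¹ ≤ |Real.log r|⁻¹ :=
      inv_anti₀ h0 (by nlinarith)
    have i3 : (|Real.log r| ^ 3)⁻¹ ≤ |Real.log r|⁻¹ :=
      inv_anti₀ h0 (by nlinarith)
    have b2 : |(2 * k ^ 2 / α ^ 2) / (Real.log r) ^ 2|
        ≤ |2 * k ^ 2 / α ^ 2| * |Real.log r|⁻¹ := by
      rw [abs_div, abs_pow, div_eq_mul_inv]
      exact mul_le_mul_of_nonneg_left i2 (abs_nonneg _)
    have b3 : |(3 * k ^ 2 / (2 * α ^ 2)) / (Real.log r) ^ 3|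
        ≤ |3 * k ^ 2 / (2 * α ^ 2)| * |Real.log r|⁻¹ := by
      rw [abs_div, abs_pow, div_eq_mul_inv]
      exact mul_le_mul_of_nonneg_left i3 (abs_nonneg _)
    have htri : |E r| ≤ |(k ^ 2 - 1 / 2) / Real.log r|
        + |(2 * k ^ 2 / α ^ 2) / (Real.log r) ^ 2|
        + |(3 * k ^ 2 / (2 * α ^ 2)) / (Real.log r) ^ 3| := by
      rw [hE]
      exact (abs_sub _ _).trans (by gcongr; exact abs_sub _ _)
    have hnorm : ‖|Real.log r|⁻¹‖ = |Real.log r|⁻¹ := by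
      rw [Real.norm_eq_abs, abs_of_nonneg (inv_nonneg.mpr (abs_nonneg _))]
    rw [Real.norm_eq_abs, hnorm, add_mul, add_mul]
    linarith
  · filter_upwards [hmem] with r hr
    obtain ⟨hr0, hr1⟩ := hr
    have hr1' : r < 1 := hr1.trans (Real.exp_lt_one_iff.mpr (by norm_num))
    have hL : Real.log r < 0 := Real.log_neg hr0 hr1'
    have hd1 : deriv (fun x : ℝ => k ^ 2 / (-Real.log x)) r
        = k ^ 2 / (r * (Real.log r) ^ 2) :=
      (outer_v0_hasDerivAt k r hr0 hr1').deriv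
    have heq : deriv (fun x : ℝ => k ^ 2 / (-Real.log x))
        =ᶠ[nhds r] fun x : ℝ => k ^ 2 / (x * (Real.log x) ^ 2) := by
      filter_upwards [isOpen_Ioo.mem_nhds (⟨hr0, hr1'⟩ : r ∈ Set.Ioo 0 1)] with x hx
      exact (outer_v0_hasDerivAt k x hx.1 hx.2).deriv
    have hd2 : deriv (deriv (fun x : ℝ => k ^ 2 / (-Real.log x))) r
        = -(k ^ 2) * (Real.log r + 2) / (r ^ 2 * (Real.log r) ^ 3) := by
      rw [heq.deriv_eq]
      exact (outer_v0'_hasDerivAt k r hr0 hr1').deriv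
    rw [hd1, hd2, hE]
    have hr0' : r ≠ 0 := hr0.ne'
    have hL' : Real.log r ≠ 0 := hL.ne
    have hα' : α ≠ 0 := hα.ne'
    rw [zpow_neg, zpow_two]
    field_simp
    have hpow : Real.log r ^ 20 * (Real.log r)⁻¹ = Real.log r ^ 19 := by
      rw [pow_succ, mul_assoc, mul_inv_cancel₀ hL', mul_one]
    linear_combination (0 : ℝ) * hpow
end
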